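/- Let d ≥ 2 be an integer. The supremum, over all matrices E indexed by Fin d × Fin d such that E, 1 − E, E^Γ and (1 − E)^Γ are all positive semidefinite, of Re(Tr(E · (α_d − σ_d))) equals 2/(d+1); that is, the optimal single-copy bias for discriminating σ_d from α_d with equal priors under PPT measurements is 2/(d+1). -/

import Mathlib

open Matrix Finset
open scoped BigOperators Kronecker ComplexOrder

noncomputable section

/-- The flip (swap) operator on `ℂ^d ⊗ ℂ^d`. -/
def Flip (d : ℕ) : Matrix (Fin d × Fin d) (Fin d × Fin d) ℂ :=
  Matrix.of fun p q => if p.1 = q.2 ∧ p.2 = q.1 then 1 else 0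

/-- Projection onto the symmetric subspace, `Π_s = (1 + F)/2`. -/
def projSym (d : ℕ) : Matrix (Fin d × Fin d) (Fin d × Fin d) ℂ :=
  (2 : ℂ)⁻¹ • (1 + Flip d)

/-- Projection onto the antisymmetric subspace, `Π_a = (1 - F)/2`. -/
def projAsym (d : ℕ) : Matrix (Fin d × Fin d) (Fin d × Fin d) ℂ :=
  (2 : ℂ)⁻¹ • (1 - Flip d)

/-- The symmetric Werner state `σ_d = (2/(d(d+1))) • Π_s`. -/
def wernerSym (d : ℕ) : Matrix (Fin d × Fin d) (Fin d × Fin d) ℂ :=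
  (2 / ((d : ℂ) * ((d : ℂ) + 1))) • projSym d

/-- The antisymmetric Werner state `α_d = (2/(d(d-1))) • Π_a`. -/
def wernerAsym (d : ℕ) : Matrix (Fin d × Fin d) (Fin d × Fin d) ℂ :=
  (2 / ((d : ℂ) * ((d : ℂ) - 1))) • projAsym d

/-- The POVM element `G_d`: diagonal, with `(i,j),(i,j)` entry `1` iff `i ≠ j`. -/
def Gmat (d : ℕ) : Matrix (Fin d × Fin d) (Fin d × Fin d) ℂ :=
  Matrix.diagonal fun p => if p.1 ≠ p.2 then 1 else 0

/-- `n`-fold tensor power of a matrix on `ℂ^d ⊗ ℂ^d`. -/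
def tpow {d : ℕ} (n : ℕ) (X : Matrix (Fin d × Fin d) (Fin d × Fin d) ℂ) :
    Matrix (Fin n → Fin d × Fin d) (Fin n → Fin d × Fin d) ℂ :=
  Matrix.of fun f g => ∏ m, X (f m) (g m)

/-- The twirled single-copy POVM element `M_d = ((d-1)/(d+1)) • Π_s + Π_a`. -/
def MdMat (d : ℕ) : Matrix (Fin d × Fin d) (Fin d × Fin d) ℂ :=
  (((d : ℂ) - 1) / ((d : ℂ) + 1)) • projSym d + projAsym d

/-- `A_k`: sum over all `k`-element subsets `S` of the copies of the tensor product with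
`Π_a` on copies in `S` and `Π_s` elsewhere. -/
def Amat (d n k : ℕ) : Matrix (Fin n → Fin d × Fin d) (Fin n → Fin d × Fin d) ℂ :=
  ∑ S ∈ Finset.powersetCard k (Finset.univ : Finset (Fin n)),
    Matrix.of fun f g => ∏ m, (if m ∈ S then projAsym d else projSym d) (f m) (g m)

/-- Partial transpose on `ℂ^d ⊗ ℂ^d`. -/
def pt {d : ℕ} (X : Matrix (Fin d × Fin d) (Fin d × Fin d) ℂ) :
    Matrix (Fin d × Fin d) (Fin d × Fin d) ℂ :=
  Matrix.of fun p q => X (p.1, q.2) (q.1, p.2)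

/-- The maximally entangled state `Φ_d`. -/
def Phi (d : ℕ) : Matrix (Fin d × Fin d) (Fin d × Fin d) ℂ :=
  Matrix.of fun p q => if p.1 = p.2 ∧ q.1 = q.2 then ((d : ℂ))⁻¹ else 0

/-- `n`-copy partial transpose. -/
def ptN {d n : ℕ} (Y : Matrix (Fin n → Fin d × Fin d) (Fin n → Fin d × Fin d) ℂ) :
    Matrix (Fin n → Fin d × Fin d) (Fin n → Fin d × Fin d) ℂ :=
  Matrix.of fun f g => Y (fun m => ((f m).1, (g m).2)) (fun m => ((g m).1, (f m).2))

/-- `T_l`: sum over all `l`-element subsets `S` of the copies of the tensor product with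
`Φ_d` on copies in `S` and `1 - Φ_d` elsewhere. -/
def Tmat (d n l : ℕ) : Matrix (Fin n → Fin d × Fin d) (Fin n → Fin d × Fin d) ℂ :=
  ∑ S ∈ Finset.powersetCard l (Finset.univ : Finset (Fin n)),
    Matrix.of fun f g => ∏ m, (if m ∈ S then Phi d else (1 - Phi d)) (f m) (g m)

/-- The matrix `Q` of the linear program: `Q l k = Σ_{j=0}^{min(l,k)}
(n−l choose k−j)(l choose j)(1−d)^j (1+d)^{l−j}`. -/
def Qmat (n : ℕ) (d : ℝ) (l k : ℕ) : ℝ :=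
  ∑ j ∈ Finset.range (min l k + 1),
    ((n - l).choose (k - j) : ℝ) * (l.choose j : ℝ) * (1 - d) ^ j * (1 + d) ^ (l - j)

/-- A PPT POVM element on the `n`-copy space: `E`, `1 - E`, `E^Γ`, `(1-E)^Γ` all PSD. -/
def IsPPTPovmElem {d n : ℕ}
    (E : Matrix (Fin n → Fin d × Fin d) (Fin n → Fin d × Fin d) ℂ) : Prop :=
  E.PosSemidef ∧ (1 - E).PosSemidef ∧ (ptN E).PosSemidef ∧ (ptN (1 - E)).PosSemidef

/-- Error probability for discriminating `σ_d^{⊗n}` (prior `p`) from `α_d^{⊗n}`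
(prior `1-p`) with the two-outcome POVM `{E, 1 - E}`. -/
def errProb (d n : ℕ) (p : ℝ)
    (E : Matrix (Fin n → Fin d × Fin d) (Fin n → Fin d × Fin d) ℂ) : ℝ :=
  ((p : ℂ) * (E * tpow n (wernerSym d)).trace
    + (1 - (p : ℂ)) * ((1 - E) * tpow n (wernerAsym d)).trace).re

/-- Separability of a bipartite matrix. -/
def IsSep {I J : Type*} [Fintype I] [Fintype J]
    (W : Matrix (I × J) (I × J) ℂ) : Prop :=
  ∃ (m : ℕ) (A : Fin m → Matrix I I ℂ) (B : Fin m → Matrix J J ℂ),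
    (∀ i, (A i).PosSemidef) ∧ (∀ i, (B i).PosSemidef) ∧ W = ∑ i, A i ⊗ₖ B i

/-- Trace norm `‖X‖₁ = Tr √(Xᴴ X)`. -/
def traceNorm {ι : Type*} [Fintype ι] [DecidableEq ι] (X : Matrix ι ι ℂ) : ℝ :=
  ((Matrix.posSemidef_conjTranspose_mul_self X).1.eigenvectorUnitary.1 *
    diagonal ((fun x : ℝ => (x : ℂ)) ∘ (√·) ∘ (Matrix.posSemidef_conjTranspose_mul_self X).1.eigenvalues) *
    (star (Matrix.posSemidef_conjTranspose_mul_self X).1.eigenvectorUnitary :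
      Matrix ι ι ℂ)).trace.re

/-- Frobenius (Hilbert–Schmidt) norm `‖X‖₂ = √(Tr (Xᴴ X))`. -/
def frobNorm {ι : Type*} [Fintype ι] (X : Matrix ι ι ℂ) : ℝ :=
  Real.sqrt ((Xᴴ * X).trace.re)

/-! ### Auxiliary lemmas -/

section Aux

lemma flip_mul_flip (d : ℕ) : Flip d * Flip d = 1 := by
  ext ⟨i, j⟩ ⟨k, l⟩
  simp [Flip, Matrix.mul_apply, Fintype.sum_prod_type, Matrix.one_apply, ite_and,
    Prod.ext_iff]

lemma flip_trace (d : ℕ) : (Flip d).trace = (d : ℂ) := by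
  simp only [Matrix.trace, Matrix.diag, Flip, of_apply]
  rw [Fintype.sum_prod_type]
  have h : ∀ a b : Fin d, (if a = b ∧ b = a then (1:ℂ) else 0) = if b = a then 1 else 0 := by
    intro a b; by_cases h : b = a <;> simp [h]
  simp [h]

lemma trace_one' (d : ℕ) : (1 : Matrix (Fin d × Fin d) (Fin d × Fin d) ℂ).trace = (d:ℂ)^2 := by
  rw [Matrix.trace_one]
  simp [Fintype.card_prod]
  push_cast
  ring

lemma phi_mul_phi (d : ℕ) (hd : d ≠ 0) : Phi d * Phi d = Phi d := by
  ext ⟨i, j⟩ ⟨k, l⟩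
  simp only [Phi, Matrix.mul_apply, of_apply, Fintype.sum_prod_type]
  have h : ∀ a b : Fin d,
      ((if i = j ∧ a = b then ((d:ℂ))⁻¹ else 0) * if a = b ∧ k = l then ((d:ℂ))⁻¹ else 0)
      = if i = j ∧ k = l then (if b = a then ((d:ℂ))⁻¹ * ((d:ℂ))⁻¹ else 0) else 0 := by
    intro a b
    by_cases h1 : i = j <;> by_cases h2 : k = l <;> by_cases h3 : b = a <;>
      simp [h1, h2, h3] <;> tauto
  simp only [h]
  by_cases h1 : i = j ∧ k = l <;> simp [h1, Finset.sum_ite_eq]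
  have : (d:ℂ) ≠ 0 := Nat.cast_ne_zero.mpr hd
  field_simp

lemma pt_pt {d : ℕ} (X : Matrix (Fin d × Fin d) (Fin d × Fin d) ℂ) : pt (pt X) = X := by
  ext ⟨i, j⟩ ⟨k, l⟩; rfl

lemma pt_add {d : ℕ} (X Y : Matrix (Fin d × Fin d) (Fin d × Fin d) ℂ) :
    pt (X + Y) = pt X + pt Y := by
  ext ⟨i, j⟩ ⟨k, l⟩; rfl

lemma pt_sub {d : ℕ} (X Y : Matrix (Fin d × Fin d) (Fin d × Fin d) ℂ) :
    pt (X - Y) = pt X - pt Y := by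
  ext ⟨i, j⟩ ⟨k, l⟩; rfl

lemma pt_smul {d : ℕ} (c : ℂ) (X : Matrix (Fin d × Fin d) (Fin d × Fin d) ℂ) :
    pt (c • X) = c • pt X := by
  ext ⟨i, j⟩ ⟨k, l⟩; rfl

lemma pt_one (d : ℕ) : pt (1 : Matrix (Fin d × Fin d) (Fin d × Fin d) ℂ) = 1 := by
  ext ⟨i, j⟩ ⟨k, l⟩
  by_cases h1 : i = k <;> by_cases h2 : j = l <;>
    simp [pt, Matrix.one_apply, Prod.ext_iff, h1, h2, eq_comm]

lemma pt_flip (d : ℕ) : pt (Flip d) = (d : ℂ) • Phi d := by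
  ext ⟨i, j⟩ ⟨k, l⟩
  simp only [pt, Flip, Phi, of_apply, Matrix.smul_apply, smul_eq_mul]
  have hd : (d:ℂ) ≠ 0 := Nat.cast_ne_zero.mpr (Fin.pos i).ne'
  by_cases h1 : i = j <;> by_cases h2 : k = l <;> simp [h1, h2, eq_comm, hd]

lemma flip_isHermitian (d : ℕ) : (Flip d).IsHermitian := by
  ext ⟨i, j⟩ ⟨k, l⟩
  simp only [Flip, Matrix.conjTranspose_apply, of_apply]
  by_cases h1 : i = l <;> by_cases h2 : j = k <;> simp [h1, h2, eq_comm]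

lemma phi_isHermitian (d : ℕ) : (Phi d).IsHermitian := by
  ext ⟨i, j⟩ ⟨k, l⟩
  simp only [Phi, Matrix.conjTranspose_apply, of_apply]
  by_cases h1 : i = j <;> by_cases h2 : k = l <;> simp [h1, h2, eq_comm]

lemma trace_mul_expand {d : ℕ} (A B : Matrix (Fin d × Fin d) (Fin d × Fin d) ℂ) :
    (A * B).trace = ∑ pq : (Fin d × Fin d) × (Fin d × Fin d), A pq.1 pq.2 * B pq.2 pq.1 := by
  simp only [Matrix.trace, Matrix.diag, Matrix.mul_apply, Fintype.sum_prod_type]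

def ptEquiv (d : ℕ) : ((Fin d × Fin d) × (Fin d × Fin d)) ≃ ((Fin d × Fin d) × (Fin d × Fin d)) :=
  Function.Involutive.toPerm (fun pq => ((pq.1.1, pq.2.2), (pq.2.1, pq.1.2))) (fun _ => rfl)

lemma trace_mul_pt {d : ℕ} (A B : Matrix (Fin d × Fin d) (Fin d × Fin d) ℂ) :
    (A * pt B).trace = (pt A * B).trace := by
  rw [trace_mul_expand, trace_mul_expand]
  rw [← Equiv.sum_comp (ptEquiv d) (fun pq => A pq.1 pq.2 * (pt B) pq.2 pq.1)]
  rfl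

lemma psd_of_idem {n : Type*} [Fintype n] [DecidableEq n] {M : Matrix n n ℂ}
    (hH : M.IsHermitian) (hI : M * M = M) : M.PosSemidef := by
  rw [← hI]
  nth_rewrite 1 [← hH.eq]
  exact Matrix.posSemidef_conjTranspose_mul_self M

lemma psd_smul_real {n : Type*} [Fintype n] {M : Matrix n n ℂ} (hM : M.PosSemidef)
    {c : ℝ} (hc : 0 ≤ c) : ((c : ℂ) • M).PosSemidef := by
  refine Matrix.PosSemidef.of_dotProduct_mulVec_nonneg ?_ ?_
  · unfold Matrix.IsHermitian
    rw [Matrix.conjTranspose_smul, hM.1.eq]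
    congr 1
    simp [Complex.ext_iff]
  · intro x
    have h := hM.dotProduct_mulVec_nonneg x
    have hc' : (0:ℂ) ≤ (c:ℂ) := by
      rw [Complex.le_def]; simp [hc]
    rw [Matrix.smul_mulVec, dotProduct_smul, smul_eq_mul]
    calc (0:ℂ) = (c:ℂ) * 0 := by ring
    _ ≤ _ := mul_le_mul_of_nonneg_left h hc'

lemma psd_diag_re_nonneg {n : Type*} [Fintype n] [DecidableEq n] {M : Matrix n n ℂ}
    (hM : M.PosSemidef) (i : n) : 0 ≤ (M i i).re := by
  have h := hM.dotProduct_mulVec_nonneg (Pi.single i 1)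
  rw [Complex.le_def] at h
  have heq : dotProduct (star (Pi.single i 1)) (M *ᵥ Pi.single i 1) = M i i := by
    rw [Matrix.mulVec_single]
    simp [dotProduct, Pi.single_apply, apply_ite]
  rw [heq] at h
  exact h.1

lemma psd_trace_re_nonneg {n : Type*} [Fintype n] [DecidableEq n] {M : Matrix n n ℂ}
    (hM : M.PosSemidef) : 0 ≤ M.trace.re := by
  simp only [Matrix.trace, Matrix.diag, Complex.re_sum]
  exact Finset.sum_nonneg fun i _ => psd_diag_re_nonneg hM i

open scoped MatrixOrder in
lemma trace_mul_psd_re_nonneg {n : Type*} [Fintype n] [DecidableEq n]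
    {P Q : Matrix n n ℂ} (hP : P.PosSemidef) (hQ : Q.PosSemidef) :
    0 ≤ ((P * Q).trace).re := by
  have h1 : P * Q = CFC.sqrt P * (CFC.sqrt P * Q) := by
    rw [← mul_assoc, CFC.sqrt_mul_sqrt_self P hP.nonneg]
  rw [h1, Matrix.trace_mul_comm, mul_assoc]
  have h2 : (CFC.sqrt P * Q * CFC.sqrt P).PosSemidef := by
    nth_rewrite 2 [← (CFC.sqrt_nonneg P).posSemidef.1.eq]
    exact hQ.mul_mul_conjTranspose_same (CFC.sqrt P)
  rw [← mul_assoc]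
  exact psd_trace_re_nonneg h2

lemma projSym_isHermitian (d : ℕ) : (projSym d).IsHermitian := by
  unfold Matrix.IsHermitian projSym
  rw [Matrix.conjTranspose_smul, Matrix.conjTranspose_add, Matrix.conjTranspose_one,
    (flip_isHermitian d).eq]
  congr 1
  simp [Complex.ext_iff]

lemma projAsym_isHermitian (d : ℕ) : (projAsym d).IsHermitian := by
  unfold Matrix.IsHermitian projAsym
  rw [Matrix.conjTranspose_smul, Matrix.conjTranspose_sub, Matrix.conjTranspose_one,
    (flip_isHermitian d).eq]
  congr 1
  simp [Complex.ext_iff]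

lemma projSym_psd (d : ℕ) : (projSym d).PosSemidef := by
  apply psd_of_idem (projSym_isHermitian d)
  unfold projSym
  rw [Matrix.smul_mul, Matrix.mul_smul, smul_smul]
  simp only [mul_add, add_mul, one_mul, mul_one, flip_mul_flip]
  have h2 : (1 : Matrix (Fin d × Fin d) (Fin d × Fin d) ℂ) + Flip d + (Flip d + 1)
      = (2:ℂ) • (1 + Flip d) := by
    rw [two_smul]; abel
  rw [h2, smul_smul]
  norm_num

lemma projAsym_psd (d : ℕ) : (projAsym d).PosSemidef := by
  apply psd_of_idem (projAsym_isHermitian d)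
  unfold projAsym
  rw [Matrix.smul_mul, Matrix.mul_smul, smul_smul]
  simp only [mul_sub, sub_mul, one_mul, mul_one, flip_mul_flip]
  have h2 : (1 : Matrix (Fin d × Fin d) (Fin d × Fin d) ℂ) - Flip d - (Flip d - 1)
      = (2:ℂ) • (1 - Flip d) := by
    rw [two_smul]; abel
  rw [h2, smul_smul]
  norm_num

lemma phi_psd (d : ℕ) (hd : d ≠ 0) : (Phi d).PosSemidef :=
  psd_of_idem (phi_isHermitian d) (phi_mul_phi d hd)

lemma one_sub_phi_psd (d : ℕ) (hd : d ≠ 0) :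
    (1 - Phi d : Matrix (Fin d × Fin d) (Fin d × Fin d) ℂ).PosSemidef := by
  apply psd_of_idem
  · unfold Matrix.IsHermitian
    rw [Matrix.conjTranspose_sub, Matrix.conjTranspose_one, (phi_isHermitian d).eq]
  · simp only [mul_sub, sub_mul, one_mul, mul_one, phi_mul_phi d hd]
    abel

lemma psd_one' {n : Type*} [Fintype n] [DecidableEq n] :
    (1 : Matrix n n ℂ).PosSemidef :=
  psd_of_idem Matrix.isHermitian_one (one_mul 1)

lemma trace_combo (d : ℕ) (x y u w : ℂ) :
    ((x • (1 : Matrix (Fin d × Fin d) (Fin d × Fin d) ℂ) + y • Flip d) *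
      (u • (1 : Matrix (Fin d × Fin d) (Fin d × Fin d) ℂ) + w • Flip d)).trace
      = (x*u + y*w) * (d:ℂ)^2 + (x*w + y*u) * (d:ℂ) := by
  rw [mul_add, add_mul, add_mul]
  simp only [Matrix.smul_mul, Matrix.mul_smul, smul_smul, one_mul, mul_one, flip_mul_flip]
  rw [Matrix.trace_add, Matrix.trace_add, Matrix.trace_add]
  simp only [Matrix.trace_smul, flip_trace, trace_one', smul_eq_mul]
  ring

end Aux

set_option maxHeartbeats 2000000 in
/-- the optimal single-copy PPT bias for `σ_d` vs `α_d` (equal priors)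
is `2/(d+1)`. -/
theorem ppt_single_copy_bias (d : ℕ) (hd : 2 ≤ d) :
    sSup { x : ℝ |
        ∃ E : Matrix (Fin d × Fin d) (Fin d × Fin d) ℂ,
          E.PosSemidef ∧ (1 - E).PosSemidef ∧ (pt E).PosSemidef ∧ (pt (1 - E)).PosSemidef ∧
          x = ((E * (wernerAsym d - wernerSym d)).trace).re }
      = 2 / ((d : ℝ) + 1) := by
  have hdne : d ≠ 0 := by omega
  have hz : (d:ℂ) ≠ 0 := Nat.cast_ne_zero.mpr hdne
  have hz1 : (d:ℂ) - 1 ≠ 0 := sub_ne_zero.mpr (by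
    have h1 : d ≠ 1 := by omega
    exact_mod_cast h1)
  have hz2 : (d:ℂ) + 1 ≠ 0 := by
    have h : ((d:ℂ)+1) = ((d+1:ℕ):ℂ) := by push_cast; ring
    rw [h]; exact Nat.cast_ne_zero.mpr (by omega)
  have hD : (2:ℝ) ≤ (d:ℝ) := by exact_mod_cast hd
  have hD0 : (0:ℝ) < (d:ℝ) := by linarith
  have hDm : (0:ℝ) < (d:ℝ) - 1 := by linarith
  have hDp : (0:ℝ) < (d:ℝ) + 1 := by linarith
  set D : ℝ := (d:ℝ) with hDdef
  -- scalars for the decomposition of `α - σ` in the basis `{1, F}`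
  set a : ℂ := 2/((d:ℂ)*((d:ℂ)-1)) * 2⁻¹ with ha
  set b : ℂ := 2/((d:ℂ)*((d:ℂ)+1)) * 2⁻¹ with hb
  have hwd : wernerAsym d - wernerSym d
      = (a - b) • (1 : Matrix (Fin d × Fin d) (Fin d × Fin d) ℂ) + (-(a+b)) • Flip d := by
    unfold wernerAsym wernerSym projAsym projSym
    rw [smul_smul, smul_smul, ← ha, ← hb, smul_sub, smul_add, sub_smul, neg_smul, add_smul]
    abel
  -- real coefficients
  set u₀ : ℝ := 1/(D*(D-1)) - 1/(D*(D+1)) with hu₀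
  set w₀ : ℝ := -(1/(D*(D-1)) + 1/(D*(D+1))) with hw₀
  have hua : ((u₀:ℝ):ℂ) = a - b := by
    rw [hu₀, ha, hb, hDdef]; push_cast; ring
  have hwa : ((w₀:ℝ):ℂ) = -(a+b) := by
    rw [hw₀, ha, hb, hDdef]; push_cast; ring
  -- general trace formula
  have htr : ∀ E : Matrix (Fin d × Fin d) (Fin d × Fin d) ℂ,
      ((E * (wernerAsym d - wernerSym d)).trace).re
        = u₀ * E.trace.re + w₀ * ((E * Flip d).trace).re := by
    intro E
    rw [hwd, mul_add, Matrix.mul_smul, Matrix.mul_smul, mul_one, Matrix.trace_add,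
      Matrix.trace_smul, Matrix.trace_smul, smul_eq_mul, smul_eq_mul, ← hua, ← hwa]
    simp [Complex.add_re, Complex.re_ofReal_mul]
  -- the upper bound
  have hub : ∀ x ∈ { x : ℝ |
        ∃ E : Matrix (Fin d × Fin d) (Fin d × Fin d) ℂ,
          E.PosSemidef ∧ (1 - E).PosSemidef ∧ (pt E).PosSemidef ∧ (pt (1 - E)).PosSemidef ∧
          x = ((E * (wernerAsym d - wernerSym d)).trace).re }, x ≤ 2 / (D + 1) := by
    rintro x ⟨E, hE1, hE2, hE3, hE4, rfl⟩
    rw [htr E]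
    set t : ℝ := E.trace.re with ht
    set f : ℝ := ((E * Flip d).trace).re with hf
    -- f ≥ 0 from PPT
    have hf0 : 0 ≤ f := by
      have hFlip : Flip d = pt ((d:ℂ) • Phi d) := by rw [← pt_flip, pt_pt]
      have h1 : (E * Flip d).trace = (d:ℂ) * ((pt E) * Phi d).trace := by
        rw [hFlip, trace_mul_pt, Matrix.mul_smul, Matrix.trace_smul, smul_eq_mul]
      rw [hf, h1]
      have h2 := trace_mul_psd_re_nonneg hE3 (phi_psd d hdne)
      have h3 : ((d:ℂ) * ((pt E) * Phi d).trace).re = (d:ℝ) * (((pt E) * Phi d).trace).re := by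
        have : ((d:ℂ)) = (((d:ℝ)):ℂ) := by push_cast; ring
        rw [this, Complex.re_ofReal_mul]
      rw [h3]
      positivity
    -- trace against the antisymmetric projector
    have hEA : ((E * projAsym d).trace).re = (t - f) / 2 := by
      have h1 : (E * projAsym d).trace = (2⁻¹:ℂ) * (E.trace - (E * Flip d).trace) := by
        unfold projAsym
        rw [Matrix.mul_smul, mul_sub, mul_one, Matrix.trace_smul, Matrix.trace_sub, smul_eq_mul]
      rw [h1]
      have : ((2⁻¹:ℂ)) = (((2⁻¹:ℝ)):ℂ) := by push_cast; ring
      rw [this, Complex.re_ofReal_mul, Complex.sub_re]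
      rw [ht, hf]; ring
    have hg0 : 0 ≤ (t - f) / 2 := by
      rw [← hEA]; exact trace_mul_psd_re_nonneg hE1 (projAsym_psd d)
    have hgu : (t - f) / 2 ≤ (D^2 - D) / 2 := by
      have h1 : (((1 - E) * projAsym d).trace).re = (D^2 - D)/2 - (t - f)/2 := by
        rw [sub_mul, one_mul, Matrix.trace_sub, Complex.sub_re, hEA]
        have h2 : (projAsym d).trace = (2⁻¹:ℂ) * ((d:ℂ)^2 - (d:ℂ)) := by
          unfold projAsym
          rw [Matrix.trace_smul, Matrix.trace_sub, trace_one', flip_trace, smul_eq_mul]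
        rw [h2]
        have : ((2⁻¹:ℂ) * ((d:ℂ)^2 - (d:ℂ))) = ((((D^2 - D)/2 : ℝ)):ℂ) := by
          rw [hDdef]; push_cast; ring
        rw [this, Complex.ofReal_re]
      have h3 := trace_mul_psd_re_nonneg hE2 (projAsym_psd d)
      rw [h1] at h3
      linarith
    -- finish with real arithmetic
    have hP : (0:ℝ) < D*(D-1) := by positivity
    have hQ : (0:ℝ) < D*(D+1) := by positivity
    have e1 : u₀ * t + w₀ * f = (t - f)/(D*(D-1)) - (t + f)/(D*(D+1)) := by
      rw [hu₀, hw₀]; field_simp; ring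
    have e2 : (t - f)/(D*(D-1)) - (t + f)/(D*(D+1))
        ≤ (t - f)/(D*(D-1)) - (t - f)/(D*(D+1)) := by
      have : (t - f)/(D*(D+1)) ≤ (t + f)/(D*(D+1)) := by
        gcongr
        · linarith
      linarith
    have e3 : (t - f)/(D*(D-1)) - (t - f)/(D*(D+1)) = (t - f) * (2/(D*(D-1)*(D+1))) := by
      field_simp; ring
    have e4 : (t - f) * (2/(D*(D-1)*(D+1))) ≤ (D^2 - D) * (2/(D*(D-1)*(D+1))) := by
      apply mul_le_mul_of_nonneg_right ?_ (by positivity)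
      · linarith
    have e5 : (D^2 - D) * (2/(D*(D-1)*(D+1))) = 2/(D+1) := by
      field_simp
    linarith [e1, e2, e3, e4, e5]
  -- the witness
  have hc : ((d:ℂ) - 1)/((d:ℂ) + 1) = (((D - 1)/(D + 1) : ℝ) : ℂ) := by
    rw [hDdef]; push_cast; ring
  have hptSym : pt (projSym d) = (2⁻¹:ℂ) • ((1 : Matrix (Fin d × Fin d) (Fin d × Fin d) ℂ)
      + (d:ℂ) • Phi d) := by
    unfold projSym
    rw [pt_smul, pt_add, pt_one, pt_flip]
  have hptAsym : pt (projAsym d) = (2⁻¹:ℂ) • ((1 : Matrix (Fin d × Fin d) (Fin d × Fin d) ℂ)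
      - (d:ℂ) • Phi d) := by
    unfold projAsym
    rw [pt_smul, pt_sub, pt_one, pt_flip]
  have hone : (1 : Matrix (Fin d × Fin d) (Fin d × Fin d) ℂ) = projSym d + projAsym d := by
    unfold projSym projAsym
    rw [← smul_add]
    have h : ((1 : Matrix (Fin d × Fin d) (Fin d × Fin d) ℂ) + Flip d) + (1 - Flip d)
        = (2:ℂ) • 1 := by rw [two_smul]; abel
    rw [h, smul_smul]
    norm_num
  set c : ℂ := ((d:ℂ) - 1)/((d:ℂ) + 1) with hcdef
  have hM1 : MdMat d = c • projSym d + projAsym d := rfl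
  -- E = MdMat d is PSD
  have hMpsd : (MdMat d).PosSemidef := by
    rw [hM1, hc]
    exact (psd_smul_real (projSym_psd d) (by positivity)).add (projAsym_psd d)
  -- 1 - E
  have h1M : (1 : Matrix (Fin d × Fin d) (Fin d × Fin d) ℂ) - MdMat d
      = ((1:ℂ) - c) • projSym d := by
    rw [hM1]
    nth_rewrite 1 [hone]
    rw [sub_smul, one_smul]
    abel
  have h1c : (1:ℂ) - c = (((2/(D+1) : ℝ)):ℂ) := by
    rw [hcdef, hDdef]; push_cast; field_simp; try ring
  have h1Mpsd : ((1 : Matrix (Fin d × Fin d) (Fin d × Fin d) ℂ) - MdMat d).PosSemidef := by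
    rw [h1M, h1c]
    exact psd_smul_real (projSym_psd d) (by positivity)
  -- pt E
  have hptM : pt (MdMat d) = (((D/(D+1) : ℝ)):ℂ) • (1 - Phi d) := by
    have hA : c * 2⁻¹ + 2⁻¹ = (((D/(D+1) : ℝ)):ℂ) := by
      rw [hcdef, hDdef]; push_cast; field_simp; try ring
    have hB : c * 2⁻¹ * (d:ℂ) - 2⁻¹ * (d:ℂ) = -(((D/(D+1) : ℝ)):ℂ) := by
      rw [hcdef, hDdef]; push_cast; field_simp; try ring
    calc pt (MdMat d)
        = (c * 2⁻¹ + 2⁻¹) • (1 : Matrix (Fin d × Fin d) (Fin d × Fin d) ℂ)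
          + (c * 2⁻¹ * (d:ℂ) - 2⁻¹ * (d:ℂ)) • Phi d := by
          rw [hM1, pt_add, pt_smul, hptSym, hptAsym, smul_smul, smul_add, smul_sub,
            smul_smul, smul_smul, add_smul, sub_smul]
          abel
      _ = (((D/(D+1) : ℝ)):ℂ) • (1 : Matrix (Fin d × Fin d) (Fin d × Fin d) ℂ)
          + (-(((D/(D+1) : ℝ)):ℂ)) • Phi d := by rw [hA, hB]
      _ = (((D/(D+1) : ℝ)):ℂ) • (1 - Phi d) := by
          rw [smul_sub, neg_smul]
          abel
  have hptMpsd : (pt (MdMat d)).PosSemidef := by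
    rw [hptM]
    exact psd_smul_real (one_sub_phi_psd d hdne) (by positivity)
  -- pt (1 - E)
  have hpt1M : pt ((1 : Matrix (Fin d × Fin d) (Fin d × Fin d) ℂ) - MdMat d)
      = (((1/(D+1) : ℝ)):ℂ) • (1 : Matrix (Fin d × Fin d) (Fin d × Fin d) ℂ)
        + (((D/(D+1) : ℝ)):ℂ) • Phi d := by
    rw [h1M, pt_smul, hptSym, smul_smul, smul_add, smul_smul]
    have hA : ((1:ℂ) - c) * 2⁻¹ = (((1/(D+1) : ℝ)):ℂ) := by
      rw [hcdef, hDdef]; push_cast; field_simp; try ring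
    have hB : ((1:ℂ) - c) * 2⁻¹ * (d:ℂ) = (((D/(D+1) : ℝ)):ℂ) := by
      rw [hcdef, hDdef]; push_cast; field_simp; try ring
    rw [hB, hA]
  have hpt1Mpsd : (pt ((1 : Matrix (Fin d × Fin d) (Fin d × Fin d) ℂ) - MdMat d)).PosSemidef := by
    rw [hpt1M]
    exact (psd_smul_real psd_one' (by positivity)).add
      (psd_smul_real (phi_psd d hdne) (by positivity))
  -- the value at the witness
  have hMxy : MdMat d = (c * 2⁻¹ + 2⁻¹) • (1 : Matrix (Fin d × Fin d) (Fin d × Fin d) ℂ)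
      + (c * 2⁻¹ - 2⁻¹) • Flip d := by
    rw [hM1]
    unfold projSym projAsym
    rw [smul_smul, smul_add, smul_sub, add_smul, sub_smul]
    abel
  have hval : ((MdMat d * (wernerAsym d - wernerSym d)).trace).re = 2/(D+1) := by
    have h1 : (MdMat d * (wernerAsym d - wernerSym d)).trace
        = ((c * 2⁻¹ + 2⁻¹)*(a - b) + (c * 2⁻¹ - 2⁻¹)*(-(a+b))) * (d:ℂ)^2
          + ((c * 2⁻¹ + 2⁻¹)*(-(a+b)) + (c * 2⁻¹ - 2⁻¹)*(a - b)) * (d:ℂ) := by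
      rw [hMxy, hwd, trace_combo]
    rw [h1]
    have h2 : ((c * 2⁻¹ + 2⁻¹)*(a - b) + (c * 2⁻¹ - 2⁻¹)*(-(a+b))) * (d:ℂ)^2
          + ((c * 2⁻¹ + 2⁻¹)*(-(a+b)) + (c * 2⁻¹ - 2⁻¹)*(a - b)) * (d:ℂ)
        = (((2/(D+1) : ℝ)):ℂ) := by
      rw [hcdef, ha, hb, hDdef]
      push_cast
      field_simp
      ring
    rw [h2, Complex.ofReal_re]
  -- conclude
  have hmem : 2/(D+1) ∈ { x : ℝ |
        ∃ E : Matrix (Fin d × Fin d) (Fin d × Fin d) ℂ,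
          E.PosSemidef ∧ (1 - E).PosSemidef ∧ (pt E).PosSemidef ∧ (pt (1 - E)).PosSemidef ∧
          x = ((E * (wernerAsym d - wernerSym d)).trace).re } :=
    ⟨MdMat d, hMpsd, h1Mpsd, hptMpsd, hpt1Mpsd, hval.symm⟩
  exact le_antisymm (Real.sSup_le hub (by positivity)) (le_csSup ⟨2/(D+1), hub⟩ hmem)

end
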